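/- Let n and k be natural numbers with k ≤ n/2, let p be an odd prime with p > k/4, and let S ⊂ {0,1}^n ⊂ ℝ^n be the set of vectors with exactly k coordinates equal to 1. Define H : S × S × S → ℤ/pℤ by H(x,y,z) = (∏_{i=1}^{n} (x_i + y_i + z_i − 1)) · (1 − (‖x−y‖²/2)^{p−1}), where the integer values x_i + y_i + z_i − 1 and ‖x−y‖²/2 (which is an integer for x, y ∈ S) are reduced modulo p. Then: (a) H(x,x,x) ≠ 0 for every x ∈ S; and (b) if H(x,y,z) ≠ 0 and it is not the case that x = y = z, then ‖x−y‖² = ‖y−z‖² = ‖z−x‖² = 2p. -/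

import Mathlib

open Finset


lemma sum01 {n : ℕ} (x y : EuclideanSpace ℝ (Fin n))
    (hx01 : ∀ i, x i = 0 ∨ x i = 1) (hy01 : ∀ i, y i = 0 ∨ y i = 1) :
    ∑ i, x i * y i = ((univ.filter fun i => x i = 1 ∧ y i = 1).card : ℝ) := by
  rw [← Finset.sum_boole]
  apply Finset.sum_congr rfl
  intro i _
  rcases hx01 i with h1 | h1 <;> rcases hy01 i with h2 | h2 <;> simp [h1, h2]

lemma norm_sub_sq01 {n : ℕ} (x y : EuclideanSpace ℝ (Fin n)) (k : ℕ)
    (hx01 : ∀ i, x i = 0 ∨ x i = 1) (hy01 : ∀ i, y i = 0 ∨ y i = 1)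
    (hxk : (univ.filter fun i => x i = 1).card = k)
    (hyk : (univ.filter fun i => y i = 1).card = k) :
    ‖x - y‖ ^ 2 = 2 * (k : ℝ) - 2 * ((univ.filter fun i => x i = 1 ∧ y i = 1).card : ℝ) := by
  have hnorm : ‖x - y‖ = Real.sqrt (∑ i, (x i - y i) ^ 2) := by
    rw [EuclideanSpace.norm_eq]
    congr 1
    apply Finset.sum_congr rfl
    intro i _
    simp [sq_abs]
  rw [hnorm, Real.sq_sqrt (by positivity)]
  have expand : ∑ i, (x i - y i) ^ 2
      = ∑ i, (x i * x i) + ∑ i, (y i * y i) - 2 * ∑ i, (x i * y i) := by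
    rw [Finset.mul_sum, ← Finset.sum_add_distrib, ← Finset.sum_sub_distrib]
    apply Finset.sum_congr rfl
    intro i _; ring
  rw [expand, sum01 x x hx01 hx01, sum01 y y hy01 hy01, sum01 x y hx01 hy01]
  have hA : (univ.filter fun i => x i = 1 ∧ x i = 1) = univ.filter fun i => x i = 1 := by
    simp only [and_self]
  have hB : (univ.filter fun i => y i = 1 ∧ y i = 1) = univ.filter fun i => y i = 1 := by
    simp only [and_self]
  rw [hA, hB, hxk, hyk]; ring

lemma veq01 {n : ℕ} (u v : EuclideanSpace ℝ (Fin n))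
    (hu : ∀ i, u i = 0 ∨ u i = 1) (hv : ∀ i, v i = 0 ∨ v i = 1)
    (hfeq : (univ.filter fun i => u i = 1) = (univ.filter fun i => v i = 1)) : u = v := by
  ext i
  have hiff : u i = 1 ↔ v i = 1 := by
    constructor <;> intro h
    · have : i ∈ univ.filter fun j => u j = 1 := by simp [h]
      rw [hfeq] at this; simpa using this
    · have : i ∈ univ.filter fun j => v j = 1 := by simp [h]
      rw [← hfeq] at this; simpa using this
  rcases hu i with h | h
  · rcases hv i with h' | h'
    · rw [h, h']
    · exact absurd (hiff.mpr h') (by rw [h]; norm_num)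
  · rw [h, hiff.mp h]



/-- The tensor `H(x,y,z) = (∏ᵢ (xᵢ + yᵢ + zᵢ - 1)) · (1 - (‖x-y‖²/2)^(p-1))` with
values in `ℤ/pℤ`: the integer values `xᵢ + yᵢ + zᵢ - 1` and `‖x-y‖²/2` (an integer
for `x, y ∈ S`, recovered here via the floor function) are reduced modulo `p`. -/
noncomputable def triangleTensor (n p : ℕ) (x y z : EuclideanSpace ℝ (Fin n)) :
    ZMod p :=
  (∏ i : Fin n, (((⌊x i + y i + z i⌋ : ℤ) : ZMod p) - 1)) *
    (1 - ((⌊‖x - y‖ ^ 2 / 2⌋ : ℤ) : ZMod p) ^ (p - 1))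

/-- For `k ≤ n/2`, `p` an odd prime with `p > k/4`, and `x, y, z` in the set `S` of
`{0,1}`-vectors with exactly `k` ones: (a) `H(x,x,x) ≠ 0`; (b) if `H(x,y,z) ≠ 0` and
not `x = y = z`, then `x, y, z` form an equilateral triangle of side `√(2p)`. -/
theorem triangleTensor_diagonal_and_support (n k p : ℕ) (hk : 2 * k ≤ n)
    (hp : p.Prime) (hodd : Odd p) (hpk : (k : ℝ) / 4 < p)
    (x y z : EuclideanSpace ℝ (Fin n))
    (hx01 : ∀ i, x i = 0 ∨ x i = 1) (hy01 : ∀ i, y i = 0 ∨ y i = 1)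
    (hz01 : ∀ i, z i = 0 ∨ z i = 1)
    (hxk : (Finset.univ.filter fun i => x i = 1).card = k)
    (hyk : (Finset.univ.filter fun i => y i = 1).card = k)
    (hzk : (Finset.univ.filter fun i => z i = 1).card = k) :
    triangleTensor n p x x x ≠ 0 ∧
    (triangleTensor n p x y z ≠ 0 → ¬(x = y ∧ y = z) →
      ‖x - y‖ ^ 2 = 2 * (p : ℝ) ∧ ‖y - z‖ ^ 2 = 2 * (p : ℝ) ∧
      ‖z - x‖ ^ 2 = 2 * (p : ℝ)) := by
  haveI : Fact p.Prime := ⟨hp⟩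
  have hp2 : p ≠ 2 := by
    rintro rfl; rw [Nat.odd_iff] at hodd; omega
  have hp3 : 3 ≤ p := by have := hp.two_le; omega
  have h2ne : (2 : ZMod p) ≠ 0 := by
    intro h0
    have : (p : ℕ) ∣ 2 := (ZMod.natCast_eq_zero_iff 2 p).mp (by exact_mod_cast h0)
    have := Nat.le_of_dvd (by norm_num) this
    omega
  have hkp : k < 4 * p := by
    have : (k : ℝ) < 4 * p := by linarith
    exact_mod_cast this
  constructor
  · -- part (a)
    unfold triangleTensor
    apply mul_ne_zero
    · rw [Finset.prod_ne_zero_iff]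
      intro i _
      rcases hx01 i with h | h
      · rw [h]; norm_num
      · rw [h]
        have h3 : ⌊(1:ℝ) + 1 + 1⌋ = 3 := by norm_num
        rw [h3]
        intro h0
        apply h2ne
        have h32 : ((3 : ℤ) : ZMod p) - 1 = 2 := by push_cast; ring
        rw [h32] at h0
        exact h0
    · rw [sub_self, norm_zero]
      norm_num
      rw [zero_pow (by omega : p - 1 ≠ 0)]
      norm_num
  · -- part (b)
    intro hH hne
    unfold triangleTensor at hH
    have hprod := (mul_ne_zero_iff.mp hH).1
    have hfac := (mul_ne_zero_iff.mp hH).2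
    have hcoord : ∀ i, x i + y i + z i ≠ 1 := by
      intro i hi
      have := Finset.prod_ne_zero_iff.mp hprod i (mem_univ i)
      rw [hi] at this
      norm_num at this
    set A := univ.filter (fun i => x i = 1) with hA
    set B := univ.filter (fun i => y i = 1) with hB
    set C := univ.filter (fun i => z i = 1) with hC
    -- membership facts
    have hmemA : ∀ i, i ∈ A ↔ x i = 1 := fun i => by simp [hA]
    have hmemB : ∀ i, i ∈ B ↔ y i = 1 := fun i => by simp [hB]
    have hmemC : ∀ i, i ∈ C ↔ z i = 1 := fun i => by simp [hC]
    have hval : ∀ (w : EuclideanSpace ℝ (Fin n)), (∀ i, w i = 0 ∨ w i = 1) →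
        ∀ i, w i ≠ 1 → w i = 0 := fun w hw i h => (hw i).resolve_right h
    -- exactly-one is forbidden: each support is covered by pairwise intersections
    have cover : ∀ (u v w : EuclideanSpace ℝ (Fin n)),
        (∀ i, u i = 0 ∨ u i = 1) → (∀ i, v i = 0 ∨ v i = 1) → (∀ i, w i = 0 ∨ w i = 1) →
        (∀ i, u i + v i + w i ≠ 1) → ∀ i, u i = 1 → v i = 1 ∨ w i = 1 := by
      intro u v w hu hv hw hcond i hui
      by_contra h
      push_neg at h
      exact hcond i (by rw [hui, hval v hv i h.1, hval w hw i h.2]; norm_num)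
    have hcover2 : ∀ i, y i + z i + x i ≠ 1 := fun i h => hcoord i (by linarith)
    have hcover3 : ∀ i, z i + x i + y i ≠ 1 := fun i h => hcoord i (by linarith)
    -- set identities
    have hAeq : (A ∩ B) ∪ (A ∩ C) = A := by
      apply subset_antisymm (union_subset inter_subset_left inter_subset_left)
      intro i hi
      rw [hmemA] at hi
      rcases cover x y z hx01 hy01 hz01 hcoord i hi with h | h
      · exact mem_union_left _ (mem_inter.mpr ⟨(hmemA i).mpr hi, (hmemB i).mpr h⟩)
      · exact mem_union_right _ (mem_inter.mpr ⟨(hmemA i).mpr hi, (hmemC i).mpr h⟩)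
    have hBeq : (B ∩ A) ∪ (B ∩ C) = B := by
      apply subset_antisymm (union_subset inter_subset_left inter_subset_left)
      intro i hi
      rw [hmemB] at hi
      rcases cover y z x hy01 hz01 hx01 hcover2 i hi with h | h
      · exact mem_union_right _ (mem_inter.mpr ⟨(hmemB i).mpr hi, (hmemC i).mpr h⟩)
      · exact mem_union_left _ (mem_inter.mpr ⟨(hmemB i).mpr hi, (hmemA i).mpr h⟩)
    have hCeq : (C ∩ A) ∪ (C ∩ B) = C := by
      apply subset_antisymm (union_subset inter_subset_left inter_subset_left)
      intro i hi
      rw [hmemC] at hi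
      rcases cover z x y hz01 hx01 hy01 hcover3 i hi with h | h
      · exact mem_union_left _ (mem_inter.mpr ⟨(hmemC i).mpr hi, (hmemA i).mpr h⟩)
      · exact mem_union_right _ (mem_inter.mpr ⟨(hmemC i).mpr hi, (hmemB i).mpr h⟩)
    set T := A ∩ B ∩ C with hT
    have hint1 : (A ∩ B) ∩ (A ∩ C) = T := by
      ext i; simp only [hT, mem_inter]; tauto
    have hint2 : (B ∩ A) ∩ (B ∩ C) = T := by
      ext i; simp only [hT, mem_inter]; tauto
    have hint3 : (C ∩ A) ∩ (C ∩ B) = T := by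
      ext i; simp only [hT, mem_inter]; tauto
    have e1 : (A ∩ B).card + (A ∩ C).card = k + T.card := by
      have := Finset.card_union_add_card_inter (A ∩ B) (A ∩ C)
      rw [hAeq, hint1, hxk] at this
      omega
    have e2 : (B ∩ A).card + (B ∩ C).card = k + T.card := by
      have := Finset.card_union_add_card_inter (B ∩ A) (B ∩ C)
      rw [hBeq, hint2, hyk] at this
      omega
    have e3 : (C ∩ A).card + (C ∩ B).card = k + T.card := by
      have := Finset.card_union_add_card_inter (C ∩ A) (C ∩ B)
      rw [hCeq, hint3, hzk] at this
      omega
    have hcomm1 : (B ∩ A).card = (A ∩ B).card := by rw [inter_comm]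
    have hcomm2 : (C ∩ A).card = (A ∩ C).card := by rw [inter_comm]
    have hcomm3 : (C ∩ B).card = (B ∩ C).card := by rw [inter_comm]
    set c := (A ∩ B).card
    set b := (A ∩ C).card
    set a := (B ∩ C).card
    have habc : a = c ∧ b = c := by omega
    -- the filters in norm_sub_sq01 are these intersections
    have hfAB : (univ.filter fun i => x i = 1 ∧ y i = 1) = A ∩ B := by
      ext i; simp [hA, hB]
    have hfBC : (univ.filter fun i => y i = 1 ∧ z i = 1) = B ∩ C := by
      ext i; simp [hB, hC]
    have hfCA : (univ.filter fun i => z i = 1 ∧ x i = 1) = C ∩ A := by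
      ext i; simp [hC, hA]
    have hnxy : ‖x - y‖ ^ 2 = 2 * (k : ℝ) - 2 * (c : ℝ) := by
      rw [norm_sub_sq01 x y k hx01 hy01 hxk hyk, hfAB]
    have hnyz : ‖y - z‖ ^ 2 = 2 * (k : ℝ) - 2 * (a : ℝ) := by
      rw [norm_sub_sq01 y z k hy01 hz01 hyk hzk, hfBC]
    have hnzx : ‖z - x‖ ^ 2 = 2 * (k : ℝ) - 2 * (b : ℝ) := by
      rw [norm_sub_sq01 z x k hz01 hx01 hzk hxk, hfCA, hcomm2]
    have hck : c ≤ k := by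
      rw [← hxk]
      exact card_le_card inter_subset_left
    -- second factor: p ∣ k - c
    have hfloor : ⌊‖x - y‖ ^ 2 / 2⌋ = (k : ℤ) - c := by
      rw [hnxy]
      have : (2 * (k : ℝ) - 2 * (c : ℝ)) / 2 = (((k : ℤ) - (c : ℤ) : ℤ) : ℝ) := by
        push_cast; ring
      rw [this, Int.floor_intCast]
    rw [hfloor] at hfac
    have hzero : (((k : ℤ) - c : ℤ) : ZMod p) = 0 := by
      by_contra h0
      rw [ZMod.pow_card_sub_one_eq_one h0] at hfac
      simp at hfac
    have hdvdZ : (p : ℤ) ∣ (k : ℤ) - c := (ZMod.intCast_zmod_eq_zero_iff_dvd _ p).mp hzero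
    have hdvd : p ∣ (k - c) := by
      have : ((k - c : ℕ) : ℤ) = (k : ℤ) - c := by omega
      exact_mod_cast this ▸ hdvdZ
    -- k - c < 2p since 2c = k + t
    have h2c : 2 * c = k + T.card := by omega
    have hsmall : k - c < 2 * p := by omega
    obtain ⟨e, he⟩ := hdvd
    have hp0 : 0 < p := hp.pos
    have hcase : k - c = 0 ∨ k - c = p := by
      have he2 : e = 0 ∨ e = 1 := by
        by_contra hcon
        push_neg at hcon
        have h2e : 2 ≤ e := by omega
        have := Nat.mul_le_mul_left p h2e
        omega
      rcases he2 with rfl | rfl <;> omega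
    rcases hcase with h0 | hpe
    · -- degenerate: x = y = z, contradiction
      exfalso
      have hceqk : c = k := by omega
      have hak : a = k := by omega
      have hAB : A = B := by
        have h1 : A ∩ B = A :=
          eq_of_subset_of_card_le inter_subset_left (by show #A ≤ c; omega)
        have h2 : A ∩ B = B :=
          eq_of_subset_of_card_le inter_subset_right (by show #B ≤ c; omega)
        rw [← h1, h2]
      have hBC : B = C := by
        have h1 : B ∩ C = B :=
          eq_of_subset_of_card_le inter_subset_left (by show #B ≤ a; omega)
        have h2 : B ∩ C = C :=
          eq_of_subset_of_card_le inter_subset_right (by show #C ≤ a; omega)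
        rw [← h1, h2]
      exact hne ⟨veq01 x y hx01 hy01 (hA ▸ hB ▸ hAB), veq01 y z hy01 hz01 (hB ▸ hC ▸ hBC)⟩
    · -- k - c = p
      have hkc : (k : ℝ) - c = p := by
        have : ((k - c : ℕ) : ℝ) = ((p : ℕ) : ℝ) := by rw [hpe]
        rw [Nat.cast_sub hck] at this
        exact this
      refine ⟨by rw [hnxy]; linarith, by rw [hnyz, habc.1]; linarith,
        by rw [hnzx, habc.2]; linarith⟩
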